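/- There is an absolute constant C such that for all udpda A1 and A2 of sizes m1 and m2 respectively, if L(A1) ⊄ L(A2) then there exists n ≤ 2^{C·(m1+m2)} with a^n ∈ L(A1) and a^n ∉ L(A2). -/

import Mathlib

/-- The data of a unary pushdown automaton over the input alphabet `{a}`
(a transition whose `Bool` component is `true` reads `a`, otherwise it
reads `ε`): bottom-of-stack symbol, initial state, final states, transitions. -/
structure PrePDA (Q Γ : Type) where
  bot : Γ
  init : Q
  final : Set Q
  δ : Set (Q × Bool × Γ × Q × List Γ)

namespace PrePDA

variable {Q Γ : Type}

/-- Valid stack contents: a word in `(Γ∖{⊥})*⊥`. -/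
def IsStack (A : PrePDA Q Γ) (s : List Γ) : Prop :=
  ∃ s', A.bot ∉ s' ∧ s = s' ++ [A.bot]

/-- A move from configuration `c1` to `c2` reading `a` (if `σ = true`)
or `ε` (if `σ = false`). -/
def Move (A : PrePDA Q Γ) (c1 : Q × List Γ) (σ : Bool) (c2 : Q × List Γ) : Prop :=
  ∃ γ w, (c1.1, σ, γ, c2.1, w) ∈ A.δ ∧
    (((γ ≠ A.bot ∨ w ≠ []) ∧ ∃ s', c1.2 = γ :: s' ∧ c2.2 = w ++ s') ∨
      (γ = A.bot ∧ w = [] ∧ c1.2 = [A.bot] ∧ c2.2 = [A.bot]))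

/-- `Steps A c1 k c2`: there is a finite computation from `c1` to `c2`
reading the word `a^k`. -/
inductive Steps (A : PrePDA Q Γ) : Q × List Γ → ℕ → Q × List Γ → Prop
  | refl (c : Q × List Γ) : Steps A c 0 c
  | tail {c1 : Q × List Γ} {k : ℕ} {c2 : Q × List Γ} {σ : Bool} {c3 : Q × List Γ} :
      Steps A c1 k c2 → A.Move c2 σ c3 → Steps A c1 (k + (if σ then 1 else 0)) c3

/-- The language of the automaton, as a set of natural numbers:
`a^k` is accepted iff `k` is in this set (acceptance by final state,
starting from the configuration `(q₀, ⊥)`). -/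
def lang (A : PrePDA Q Γ) : Set ℕ :=
  {k | ∃ c : Q × List Γ, A.Steps (A.init, [A.bot]) k c ∧ c.1 ∈ A.final}

end PrePDA

/-- A unary deterministic pushdown automaton (udpda): finitely many states and
stack symbols, well-formed transitions (each pushed word has length at most 2,
and the bottom symbol is neither pushed above other symbols nor removed), and
at most one move available at every configuration. -/
structure UDPDA (Q Γ : Type) extends PrePDA Q Γ where
  finQ : Finite Q
  finΓ : Finite Γ
  wf : ∀ q1 σ γ q2 w, (q1, σ, γ, q2, w) ∈ δ →
    w.length ≤ 2 ∧
      ((γ ≠ bot ∧ bot ∉ w) ∨ (γ = bot ∧ (w = [] ∨ ∃ w', bot ∉ w' ∧ w = w' ++ [bot])))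
  det : ∀ c σ1 c1 σ2 c2, toPrePDA.IsStack c.2 →
    toPrePDA.Move c σ1 c1 → toPrePDA.Move c σ2 c2 → σ1 = σ2 ∧ c1 = c2

namespace UDPDA

variable {Q Γ : Type}

/-- The size of a udpda: `|Q| · |Γ|`. -/
noncomputable def size (A : UDPDA Q Γ) : ℕ := Nat.card Q * Nat.card Γ

/-- The language of a udpda. -/
def lang (A : UDPDA Q Γ) : Set ℕ := A.toPrePDA.lang

end UDPDA


namespace UDPDA

variable {Q Γ : Type} (A : UDPDA Q Γ)

/-- The (total) deterministic step function, together with the bit telling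
whether an `a` was read; halting configurations are frozen. -/
noncomputable def stepB (c : Q × List Γ) : Bool × (Q × List Γ) :=
  have := Classical.propDecidable
  if h : ∃ p : Bool × (Q × List Γ), A.toPrePDA.Move c p.1 p.2 then h.choose else (false, c)

noncomputable def step (c : Q × List Γ) : Q × List Γ := (A.stepB c).2

noncomputable def rbit (c : Q × List Γ) : ℕ := if (A.stepB c).1 then 1 else 0

noncomputable def run (c : Q × List Γ) (i : ℕ) : Q × List Γ := A.step^[i] c

noncomputable def cnt (c : Q × List Γ) (i : ℕ) : ℕ :=
  ∑ r ∈ Finset.range i, A.rbit (A.run c r)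

lemma rbit_le_one (c : Q × List Γ) : A.rbit c ≤ 1 := by
  unfold rbit; split <;> omega

lemma stepB_move {c : Q × List Γ} (h : ∃ p : Bool × (Q × List Γ), A.toPrePDA.Move c p.1 p.2) :
    A.toPrePDA.Move c (A.stepB c).1 (A.stepB c).2 := by
  rw [stepB, dif_pos h]; exact h.choose_spec

lemma stepB_frozen {c : Q × List Γ} (h : ¬ ∃ p : Bool × (Q × List Γ), A.toPrePDA.Move c p.1 p.2) :
    A.stepB c = (false, c) := by
  rw [stepB, dif_neg h]

lemma stepB_eq {c : Q × List Γ} {σ : Bool} {c' : Q × List Γ}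
    (hv : A.toPrePDA.IsStack c.2) (hm : A.toPrePDA.Move c σ c') :
    A.stepB c = (σ, c') := by
  have hx : ∃ p : Bool × (Q × List Γ), A.toPrePDA.Move c p.1 p.2 := ⟨(σ, c'), hm⟩
  have h2 := A.stepB_move hx
  obtain ⟨h3, h4⟩ := A.det c _ _ _ _ hv h2 hm
  exact Prod.ext h3 h4

lemma run_zero (c : Q × List Γ) : A.run c 0 = c := rfl

lemma run_succ (c : Q × List Γ) (i : ℕ) : A.run c (i + 1) = A.step (A.run c i) :=
  Function.iterate_succ_apply' _ _ _

lemma run_one (c : Q × List Γ) : A.run c 1 = A.step c := rfl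

lemma run_add (c : Q × List Γ) (i j : ℕ) : A.run c (i + j) = A.run (A.run c i) j := by
  unfold run
  rw [Nat.add_comm, Function.iterate_add_apply]

lemma cnt_zero (c : Q × List Γ) : A.cnt c 0 = 0 := rfl

lemma cnt_succ (c : Q × List Γ) (i : ℕ) :
    A.cnt c (i + 1) = A.cnt c i + A.rbit (A.run c i) :=
  Finset.sum_range_succ _ _

lemma cnt_add (c : Q × List Γ) (i j : ℕ) :
    A.cnt c (i + j) = A.cnt c i + A.cnt (A.run c i) j := by
  induction j with
  | zero => simp [cnt_zero]
  | succ j ih =>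
      rw [← Nat.add_assoc, cnt_succ, ih, cnt_succ, run_add, Nat.add_assoc]

lemma cnt_mono (c : Q × List Γ) {i j : ℕ} (h : i ≤ j) : A.cnt c i ≤ A.cnt c j := by
  obtain ⟨k, rfl⟩ := Nat.le.dest h
  rw [cnt_add]; omega

lemma cnt_le (c : Q × List Γ) (i : ℕ) : A.cnt c i ≤ i := by
  calc A.cnt c i ≤ ∑ r ∈ Finset.range i, 1 :=
        Finset.sum_le_sum (fun r _ => A.rbit_le_one _)
    _ = i := by simp


section Stacks

lemma isStack_ne_nil {s : List Γ} (h : A.toPrePDA.IsStack s) : s ≠ [] := by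
  obtain ⟨u, -, rfl⟩ := h; simp

lemma isStack_length_pos {s : List Γ} (h : A.toPrePDA.IsStack s) : 1 ≤ s.length := by
  have := A.isStack_ne_nil h
  cases s <;> simp_all

lemma isStack_bot : A.toPrePDA.IsStack [A.bot] := ⟨[], by simp, by simp⟩

lemma isStack_pair {γ : Γ} (h : γ ≠ A.bot) : A.toPrePDA.IsStack [γ, A.bot] :=
  ⟨[γ], by simpa using (Ne.symm h), by simp⟩

lemma isStack_length_one {s : List Γ} (h : A.toPrePDA.IsStack s) (hl : s.length = 1) :
    s = [A.bot] := by
  obtain ⟨u, -, rfl⟩ := h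
  have : u = [] := by
    cases u with
    | nil => rfl
    | cons a l => simp at hl
  simp [this]

lemma isStack_head_ne_bot {γ : Γ} {s : List Γ} (h : A.toPrePDA.IsStack (γ :: s))
    (hl : s ≠ []) : γ ≠ A.bot := by
  obtain ⟨u, hu, he⟩ := h
  cases u with
  | nil =>
      exfalso
      apply hl
      have h2 : γ :: s = [A.bot] := by simpa using he
      simpa using congrArg List.tail h2
  | cons a l =>
      have ha : γ = a ∧ s = l ++ [A.bot] := by simpa using he
      intro hγ
      exact hu (by rw [← ha.1, hγ]; exact List.mem_cons_self)

lemma isStack_tail {γ : Γ} {s : List Γ} (h : A.toPrePDA.IsStack (γ :: s))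
    (hγ : γ ≠ A.bot) : A.toPrePDA.IsStack s := by
  obtain ⟨u, hu, he⟩ := h
  cases u with
  | nil =>
      exfalso
      have h2 : γ = A.bot ∧ s = [] := by simpa using he
      exact hγ h2.1
  | cons a l =>
      have ha : γ = a ∧ s = l ++ [A.bot] := by simpa using he
      refine ⟨l, fun hb => hu (by simp [hb]), ha.2⟩

end Stacks

section MoveLemmas

/-- Structure of a move: either an ordinary pop-push, or the bottom self-loop. -/
lemma move_cases {c c' : Q × List Γ} {σ : Bool} (hm : A.toPrePDA.Move c σ c') :
    (∃ γ w u, c.2 = γ :: u ∧ c'.2 = w ++ u ∧ w.length ≤ 2 ∧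
        ((γ ≠ A.bot ∧ A.bot ∉ w) ∨ (γ = A.bot ∧ ∃ w', A.bot ∉ w' ∧ w = w' ++ [A.bot]))) ∨
      (c.2 = [A.bot] ∧ c'.2 = [A.bot]) := by
  obtain ⟨γ, w, ht, hcase⟩ := hm
  rcases hcase with ⟨hne, u, hc, hc'⟩ | ⟨hγ, hw, hc, hc'⟩
  · left
    obtain ⟨hlen, hwf⟩ := A.wf _ _ _ _ _ ht
    refine ⟨γ, w, u, hc, hc', hlen, ?_⟩
    rcases hwf with h | ⟨h1, h2⟩
    · exact Or.inl h
    · rcases h2 with rfl | h2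
      · rcases hne with h | h
        · exact absurd h1 h
        · exact absurd rfl h
      · exact Or.inr ⟨h1, h2⟩
  · exact Or.inr ⟨hc, hc'⟩

/-- Moves preserve validity of stacks. -/
lemma move_isStack {c c' : Q × List Γ} {σ : Bool} (hv : A.toPrePDA.IsStack c.2)
    (hm : A.toPrePDA.Move c σ c') : A.toPrePDA.IsStack c'.2 := by
  rcases A.move_cases hm with ⟨γ, w, u, hc, hc', -, hwf⟩ | ⟨-, hc'⟩
  · obtain ⟨v, hv1, hv2⟩ := hv
    rcases hwf with ⟨hγ, hw⟩ | ⟨rfl, w', hw', rfl⟩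
    · -- γ ≠ ⊥ : v nonempty, v = γ :: v'
      cases v with
      | nil =>
          exfalso
          rw [hc] at hv2
          have h2 : γ = A.bot ∧ u = [] := by simpa using hv2
          exact hγ h2.1
      | cons a v' =>
          rw [hc] at hv2
          have h2 : γ = a ∧ u = v' ++ [A.bot] := by simpa using hv2
          rw [hc', h2.2]
          refine ⟨w ++ v', ?_, by simp⟩
          intro hb
          rcases List.mem_append.mp hb with h | h
          · exact hw h
          · exact hv1 (by simp [h])
    · -- γ = ⊥ : then v = [] and u = []
      cases v with
      | cons a v' =>
          exfalso
          rw [hc] at hv2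
          have h2 : A.bot = a ∧ u = v' ++ [A.bot] := by simpa using hv2
          exact hv1 (by simp [← h2.1])
      | nil =>
          rw [hc] at hv2
          have h2 : u = [] := by simpa using hv2
          rw [hc', h2]
          exact ⟨w', hw', by simp⟩
  · rw [hc']; exact A.isStack_bot

lemma move_length {c c' : Q × List Γ} {σ : Bool} (hm : A.toPrePDA.Move c σ c') :
    c.2.length ≤ c'.2.length + 1 := by
  rcases A.move_cases hm with ⟨γ, w, u, hc, hc', -, -⟩ | ⟨hc, hc'⟩
  · rw [hc, hc']; simp only [List.length_cons, List.length_append]; omega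
  · simp [hc, hc']

/-- Moves preserve proper suffixes of the stack. -/
lemma move_suffix {c c' : Q × List Γ} {σ : Bool} {ρ : List Γ} (hm : A.toPrePDA.Move c σ c')
    (hs : ρ <:+ c.2) (hl : ρ.length < c.2.length) : ρ <:+ c'.2 := by
  rcases A.move_cases hm with ⟨γ, w, u, hc, hc', -, -⟩ | ⟨hc, hc'⟩
  · rw [hc] at hs hl
    rw [hc']
    rcases List.suffix_cons_iff.mp hs with h | h
    · subst h; simp at hl
    · exact h.trans (List.suffix_append _ _)
  · rw [hc] at hs hl
    rw [hc']
    have h0 : ρ = [] := by simpa using hl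
    simp [h0]

end MoveLemmas

section RunLemmas

lemma isStack_step {c : Q × List Γ} (hv : A.toPrePDA.IsStack c.2) :
    A.toPrePDA.IsStack (A.step c).2 := by
  by_cases h : ∃ p : Bool × (Q × List Γ), A.toPrePDA.Move c p.1 p.2
  · exact A.move_isStack hv (A.stepB_move h)
  · rw [step, A.stepB_frozen h]; exact hv

lemma isStack_run {c : Q × List Γ} (hv : A.toPrePDA.IsStack c.2) (i : ℕ) :
    A.toPrePDA.IsStack (A.run c i).2 := by
  induction i with
  | zero => exact hv
  | succ i ih => rw [run_succ]; exact A.isStack_step ih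

lemma step_suffix {c : Q × List Γ} {ρ : List Γ} (hs : ρ <:+ c.2)
    (hl : ρ.length < c.2.length) : ρ <:+ (A.step c).2 := by
  by_cases h : ∃ p : Bool × (Q × List Γ), A.toPrePDA.Move c p.1 p.2
  · exact A.move_suffix (A.stepB_move h) hs hl
  · rw [step, A.stepB_frozen h]; exact hs

/-- If the stack height stays strictly above `|ρ|` before time `t`, the
suffix `ρ` is still there at time `t`. -/
lemma run_suffix {c : Q × List Γ} {ρ : List Γ} (hs : ρ <:+ c.2) (t : ℕ)
    (hh : ∀ r < t, ρ.length < (A.run c r).2.length) : ρ <:+ (A.run c t).2 := by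
  induction t with
  | zero => exact hs
  | succ t ih =>
      rw [run_succ]
      exact A.step_suffix (ih fun r hr => hh r (by omega)) (hh t (by omega))

lemma frozen_run {c : Q × List Γ}
    (h : ¬ ∃ p : Bool × (Q × List Γ), A.toPrePDA.Move c p.1 p.2) (i : ℕ) :
    A.run c i = c := by
  have hstep : A.step c = c := by rw [step, A.stepB_frozen h]
  exact Function.iterate_fixed hstep i

end RunLemmas


section Lang

lemma steps_to_run {c : Q × List Γ} (hv : A.toPrePDA.IsStack c.2) {k : ℕ} {c' : Q × List Γ}
    (h : A.toPrePDA.Steps c k c') : ∃ i, A.run c i = c' ∧ A.cnt c i = k := by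
  induction h with
  | refl => exact ⟨0, rfl, rfl⟩
  | @tail k c2 σ c3 hsteps hmove ih =>
      obtain ⟨i, hrun, hcnt⟩ := ih
      have hv2 : A.toPrePDA.IsStack c2.2 := hrun ▸ A.isStack_run hv i
      have hB : A.stepB c2 = (σ, c3) := A.stepB_eq hv2 hmove
      refine ⟨i + 1, ?_, ?_⟩
      · rw [run_succ, hrun, step, hB]
      · rw [cnt_succ, hcnt, hrun, rbit, hB]

lemma run_to_steps (c : Q × List Γ) (i : ℕ) : A.toPrePDA.Steps c (A.cnt c i) (A.run c i) := by
  induction i with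
  | zero => exact PrePDA.Steps.refl c
  | succ i ih =>
      by_cases h : ∃ p : Bool × (Q × List Γ), A.toPrePDA.Move (A.run c i) p.1 p.2
      · have hm := A.stepB_move h
        have := PrePDA.Steps.tail ih hm
        have hrn : A.run c (i + 1) = (A.stepB (A.run c i)).2 := by rw [run_succ, step]
        have hcn : A.cnt c (i + 1) =
            A.cnt c i + (if (A.stepB (A.run c i)).1 then 1 else 0) := by
          rw [cnt_succ, rbit]
        rw [hrn, hcn]
        exact this
      · have hf := A.stepB_frozen h
        have hrn : A.run c (i + 1) = A.run c i := by rw [run_succ, step, hf]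
        have hcn : A.cnt c (i + 1) = A.cnt c i := by rw [cnt_succ, rbit, hf]; simp
        rw [hrn, hcn]
        exact ih

/-- Characterization of the language via the deterministic run. -/
lemma mem_lang_iff (n : ℕ) :
    n ∈ A.lang ↔ ∃ i, A.cnt (A.init, [A.bot]) i = n ∧
      (A.run (A.init, [A.bot]) i).1 ∈ A.final := by
  constructor
  · rintro ⟨c, hsteps, hfin⟩
    obtain ⟨i, hrun, hcnt⟩ := A.steps_to_run A.isStack_bot hsteps
    exact ⟨i, hcnt, by rw [hrun]; exact hfin⟩
  · rintro ⟨i, hcnt, hfin⟩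
    exact ⟨A.run (A.init, [A.bot]) i, hcnt ▸ A.run_to_steps _ i, hfin⟩

end Lang


section Mirror

/-- A move with a nontrivial part of the stack above `ρ` can be mirrored with
`ρ` replaced by any other list. -/
lemma move_mirror {c1 : Q × List Γ} {τ ρ : List Γ} (ρ' : List Γ) (hτ : τ ≠ []) (hρ : ρ ≠ [])
    {σ : Bool} {c2 : Q × List Γ} (hm : A.toPrePDA.Move c1 σ c2) (hc1 : c1.2 = τ ++ ρ) :
    ∃ τ₂, c2.2 = τ₂ ++ ρ ∧ A.toPrePDA.Move (c1.1, τ ++ ρ') σ (c2.1, τ₂ ++ ρ') := by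
  obtain ⟨a, τ₁, rfl⟩ := List.exists_cons_of_ne_nil hτ
  obtain ⟨b, ρ₂, rfl⟩ := List.exists_cons_of_ne_nil hρ
  obtain ⟨γ, w, ht, hcase⟩ := hm
  rcases hcase with ⟨hne, u, hc, hc'⟩ | ⟨hγ, hw, hc, hc'⟩
  · rw [hc1] at hc
    have hγa : γ = a := by
      have := congrArg (List.head? ·) hc
      simpa using this.symm
    have hu : u = τ₁ ++ b :: ρ₂ := by
      have := congrArg List.tail hc
      simpa [hγa] using this.symm
    refine ⟨w ++ τ₁, by rw [hc', hu]; simp, ?_⟩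
    refine ⟨γ, w, ht, Or.inl ⟨hne, τ₁ ++ ρ', ?_, by simp⟩⟩
    simp [hγa]
  · exfalso
    rw [hc1] at hc
    have := congrArg List.length hc
    simp at this

/-- The mirror lemma: as long as the stack height stays strictly above `|ρ|`,
the run from `(q, τ ++ ρ)` is faithfully mirrored by the run from `(q, τ ++ ρ')`. -/
lemma mirror {q : Q} {τ ρ ρ' : List Γ} (hτ : τ ≠ []) (hρ : ρ ≠ []) (hρ' : ρ' ≠ [])
    (hv : A.toPrePDA.IsStack (τ ++ ρ)) (hv' : A.toPrePDA.IsStack (τ ++ ρ'))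
    (t : ℕ) (hh : ∀ r < t, ρ.length < (A.run (q, τ ++ ρ) r).2.length) :
    ∃ τ', (A.run (q, τ ++ ρ) t).2 = τ' ++ ρ ∧
      A.run (q, τ ++ ρ') t = ((A.run (q, τ ++ ρ) t).1, τ' ++ ρ') ∧
      A.cnt (q, τ ++ ρ') t = A.cnt (q, τ ++ ρ) t := by
  induction t with
  | zero => exact ⟨τ, rfl, rfl, rfl⟩
  | succ t ih =>
      obtain ⟨τ', h1, h2, h3⟩ := ih (fun r hr => hh r (by omega))
      have hτ' : τ' ≠ [] := by
        have := hh t (by omega)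
        rw [h1] at this
        intro he
        rw [he] at this
        simp at this
      set ct := A.run (q, τ ++ ρ) t with hct
      have hctEq : ct = (ct.1, τ' ++ ρ) := Prod.ext rfl h1
      have hvt : A.toPrePDA.IsStack ct.2 := A.isStack_run (by exact hv) t
      have hvt' : A.toPrePDA.IsStack (τ' ++ ρ') := by
        have := A.isStack_run (c := (q, τ ++ ρ')) (by exact hv') t
        rw [h2] at this
        exact this
      by_cases hex : ∃ p : Bool × (Q × List Γ), A.toPrePDA.Move ct p.1 p.2
      · have hm := A.stepB_move hex
        obtain ⟨τ₂, hA, hB⟩ := A.move_mirror ρ' hτ' hρ hm h1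
        have hstepB' : A.stepB (ct.1, τ' ++ ρ') = ((A.stepB ct).1, ((A.stepB ct).2.1, τ₂ ++ ρ')) :=
          A.stepB_eq (by exact hvt') hB
        refine ⟨τ₂, ?_, ?_, ?_⟩
        · rw [run_succ, ← hct, step]; exact hA
        · rw [run_succ, h2, run_succ, ← hct]
          show A.step (ct.1, τ' ++ ρ') = _
          rw [step, hstepB', step]
        · rw [cnt_succ, cnt_succ, h3, h2, ← hct]
          congr 1
          rw [rbit, rbit, hstepB']
      · have hex' : ¬ ∃ p : Bool × (Q × List Γ), A.toPrePDA.Move (ct.1, τ' ++ ρ') p.1 p.2 := by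
          rintro ⟨p, hp⟩
          obtain ⟨τ₂, -, hB⟩ := A.move_mirror ρ hτ' hρ' hp rfl
          exact hex ⟨(p.1, (p.2.1, τ₂ ++ ρ)), by rw [hctEq]; exact hB⟩
        have hf := A.stepB_frozen hex
        have hf' := A.stepB_frozen hex'
        refine ⟨τ', ?_, ?_, ?_⟩
        · rw [run_succ, ← hct, step, hf]; exact h1
        · rw [run_succ, h2, run_succ, ← hct]
          show A.step (ct.1, τ' ++ ρ') = _
          rw [step, hf', step, hf]
        · rw [cnt_succ, cnt_succ, h3, h2, ← hct]
          congr 1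
          rw [rbit, rbit, hf, hf']

end Mirror


section Pops

/-- `PopsAt p γ t`: starting from state `p` with `γ` on top of the (otherwise
empty) stack, the run first reaches stack height `1` (i.e. pops `γ`) at time `t`. -/
def PopsAt (p : Q) (γ : Γ) (t : ℕ) : Prop :=
  γ ≠ A.bot ∧ (A.run (p, [γ, A.bot]) t).2.length = 1 ∧
    ∀ r < t, 2 ≤ (A.run (p, [γ, A.bot]) r).2.length

lemma popsAt_unique {p : Q} {γ : Γ} {t1 t2 : ℕ} (h1 : A.PopsAt p γ t1)
    (h2 : A.PopsAt p γ t2) : t1 = t2 := by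
  rcases Nat.lt_trichotomy t1 t2 with h | h | h
  · have ha := h2.2.2 t1 h
    have hb := h1.2.1
    omega
  · exact h
  · have ha := h1.2.2 t2 h
    have hb := h2.2.1
    omega

/-- Decomposition of a pop: it is either a single step, or a step pushing one
or two symbols each of which must in turn be popped. -/
lemma popsAt_rec {p : Q} {γ : Γ} {t : ℕ} (h : A.PopsAt p γ t) :
    t = 1 ∨
      (∃ p1 γ1 t1, A.PopsAt p1 γ1 t1 ∧ t1 < t ∧ t = 1 + t1) ∨
      (∃ p1 γ1 t1 p2 γ2 t2, A.PopsAt p1 γ1 t1 ∧ A.PopsAt p2 γ2 t2 ∧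
        t1 < t ∧ t2 < t ∧ t = 1 + t1 + t2) := by
  obtain ⟨hγ, hlen1, hge⟩ := h
  set c0 : Q × List Γ := (p, [γ, A.bot]) with hc0
  have ht0 : t ≠ 0 := by
    intro h0
    rw [h0] at hlen1
    simp [run_zero, hc0] at hlen1
  have hex : ∃ pp : Bool × (Q × List Γ), A.toPrePDA.Move c0 pp.1 pp.2 := by
    by_contra hno
    have := A.frozen_run hno t
    rw [this] at hlen1
    simp [hc0] at hlen1
  have hm := A.stepB_move hex
  rcases A.move_cases hm with ⟨γ0, w, u, hc, hc', hwl, hwf⟩ | ⟨hc, -⟩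
  swap
  · exfalso; simp [hc0] at hc
  have hγ0 : γ0 = γ := by
    have h := congrArg (List.head? ·) hc
    simp [hc0] at h
    exact h.symm
  have hu : u = [A.bot] := by
    have h := congrArg List.tail hc
    simp [hc0] at h
    exact h.symm
  subst hγ0
  subst hu
  have hbw : A.bot ∉ w := by
    rcases hwf with ⟨-, h⟩ | ⟨h, -⟩
    · exact h
    · exact absurd h hγ
  have hrun1 : A.run c0 1 = (A.stepB c0).2 := rfl
  have hshift : ∀ r, A.run c0 (1 + r) = A.run ((A.stepB c0).2) r := by
    intro r
    rw [run_add, hrun1]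
  -- case on the length of w
  match w, hwl with
  | [], _ =>
      left
      -- stack after one step is [⊥]
      have hl1 : (A.run c0 1).2.length = 1 := by rw [hrun1, hc']; simp
      rcases Nat.lt_or_ge 1 t with hlt | hle
      · have := hge 1 hlt
        omega
      · omega
  | [γ1], _ =>
      right; left
      have hγ1 : γ1 ≠ A.bot := by
        simp at hbw
        exact fun h => hbw h.symm
      have hc1 : (A.stepB c0).2 = ((A.stepB c0).2.1, [γ1, A.bot]) := by
        refine Prod.ext rfl ?_
        rw [hc']; simp
      have ht1 : 2 ≤ t := by
        rcases Nat.lt_or_ge 1 t with hlt | hle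
        · omega
        · exfalso
          have h1t : t = 1 := by omega
          rw [h1t, hrun1, hc'] at hlen1
          simp at hlen1
      refine ⟨(A.stepB c0).2.1, γ1, t - 1, ⟨hγ1, ?_, ?_⟩, by omega, by omega⟩
      · have := hshift (t - 1)
        rw [hc1] at this
        rw [← this]
        have : 1 + (t - 1) = t := by omega
        rw [this]
        exact hlen1
      · intro r hr
        have := hshift r
        rw [hc1] at this
        rw [← this]
        exact hge (1 + r) (by omega)
  | [γ1, γ2], _ =>
      right; right
      simp at hbw
      have hγ1 : γ1 ≠ A.bot := fun h => hbw.1 h.symm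
      have hγ2 : γ2 ≠ A.bot := fun h => hbw.2 h.symm
      set q1 := (A.stepB c0).2.1 with hq1
      have hc1 : (A.stepB c0).2 = (q1, [γ1, γ2, A.bot]) := by
        refine Prod.ext rfl ?_
        rw [hc']; simp
      have hshift2 : ∀ r, A.run c0 (1 + r) = A.run (q1, [γ1, γ2, A.bot]) r := by
        intro r; rw [hshift r, hc1]
      -- t1 : first time the inner run reaches height ≤ 2
      have hS : ∃ r, (A.run (q1, [γ1, γ2, A.bot]) r).2.length ≤ 2 := by
        refine ⟨t - 1, ?_⟩
        rw [← hshift2]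
        have : 1 + (t - 1) = t := by omega
        rw [this, hlen1]
        omega
      set t1 := Nat.find hS with ht1def
      have ht1spec : (A.run (q1, [γ1, γ2, A.bot]) t1).2.length ≤ 2 := Nat.find_spec hS
      have ht1min : ∀ r < t1, 2 < (A.run (q1, [γ1, γ2, A.bot]) r).2.length := by
        intro r hr
        have := Nat.find_min hS hr
        omega
      have ht1pos : 1 ≤ t1 := by
        rcases Nat.eq_zero_or_pos t1 with h0 | h
        · exfalso
          rw [h0] at ht1spec
          simp [run_zero] at ht1spec
        · exact h
      have ht1le : t1 ≤ t - 1 := by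
        apply Nat.find_le
        rw [← hshift2]
        have : 1 + (t - 1) = t := by omega
        rw [this, hlen1]; omega
      -- at time t1 the inner stack is exactly [γ2, ⊥]
      have hsuf : [γ2, A.bot] <:+ (A.run (q1, [γ1, γ2, A.bot]) t1).2 := by
        apply A.run_suffix (by simp) t1
        intro r hr
        have := ht1min r hr
        simpa using this
      have hstack1 : (A.run (q1, [γ1, γ2, A.bot]) t1).2 = [γ2, A.bot] := by
        refine (List.IsSuffix.eq_of_length hsuf ?_).symm
        have := hsuf.length_le
        simp at this ⊢
        omega
      -- mirror to get the pop of γ1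
      have hmir := A.mirror (q := q1) (τ := [γ1]) (ρ := [γ2, A.bot]) (ρ' := [A.bot])
        (by simp) (by simp) (by simp)
        (⟨[γ1, γ2], by simp [Ne.symm hγ1, Ne.symm hγ2], by simp⟩)
        (by simpa using A.isStack_pair hγ1)
      set q2 := (A.run (q1, [γ1, γ2, A.bot]) t1).1 with hq2
      obtain ⟨τ', hm1, hm2, -⟩ := hmir t1 (fun r hr => by simpa using ht1min r hr)
      simp only [List.singleton_append] at hm1 hm2
      have hτnil : τ' = [] := by
        rw [hstack1] at hm1
        have := congrArg List.length hm1
        simp at this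
        exact this
      rw [hτnil] at hm2
      simp only [List.nil_append] at hm2
      have hpop1 : A.PopsAt q1 γ1 t1 := by
        refine ⟨hγ1, by rw [hm2]; rfl, ?_⟩
        intro r hr
        obtain ⟨τr, hr1, hr2, -⟩ := hmir r (fun r' hr' => by
          simpa using ht1min r' (by omega))
        simp only [List.singleton_append] at hr1 hr2
        have hτr : τr ≠ [] := by
          intro hnil
          have hx := ht1min r hr
          rw [hr1, hnil] at hx
          simp at hx
        rw [hr2]
        obtain ⟨a, l, rfl⟩ := List.exists_cons_of_ne_nil hτr
        simp
      -- the remaining run pops γ2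
      have hrun1t1 : A.run c0 (1 + t1) = (q2, [γ2, A.bot]) := by
        rw [hshift2 t1]
        exact Prod.ext rfl hstack1
      have hshift3 : ∀ r, A.run c0 (1 + t1 + r) = A.run (q2, [γ2, A.bot]) r := by
        intro r
        rw [run_add, hrun1t1]
      have htt : 1 + t1 ≤ t := by omega
      set t2 := t - 1 - t1 with ht2def
      have hteq : t = 1 + t1 + t2 := by omega
      have hpop2 : A.PopsAt q2 γ2 t2 := by
        refine ⟨hγ2, ?_, ?_⟩
        · rw [← hshift3, ← hteq]; exact hlen1
        · intro r hr
          rw [← hshift3]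
          exact hge (1 + t1 + r) (by omega)
      exact ⟨q1, γ1, t1, q2, γ2, t2, hpop1, hpop2, by omega, by omega, hteq⟩

end Pops


section PopBound

/-- Pairs that get popped in time `< t`. -/
def popSet (t : ℕ) : Set (Q × Γ) := {x | ∃ t' < t, A.PopsAt x.1 x.2 t'}

lemma popSet_finite (t : ℕ) : (A.popSet t).Finite := by
  haveI := A.finQ
  haveI := A.finΓ
  exact Set.toFinite _

lemma popSet_mono {t t' : ℕ} (h : t ≤ t') : A.popSet t ⊆ A.popSet t' := by
  rintro x ⟨s, hs, hp⟩
  exact ⟨s, by omega, hp⟩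

lemma popsAt_rank {p : Q} {γ : Γ} {t t' : ℕ} (hp : A.PopsAt p γ t) (ht : t < t') :
    (A.popSet t).ncard + 1 ≤ (A.popSet t').ncard := by
  have hnot : (p, γ) ∉ A.popSet t := by
    rintro ⟨s, hs, hps⟩
    have := A.popsAt_unique hps hp
    omega
  have hsub : insert (p, γ) (A.popSet t) ⊆ A.popSet t' := by
    rintro x (rfl | hx)
    · exact ⟨t, ht, hp⟩
    · exact A.popSet_mono (by omega) hx
  calc (A.popSet t).ncard + 1 = (insert (p, γ) (A.popSet t)).ncard :=
        (Set.ncard_insert_of_notMem hnot (A.popSet_finite t)).symm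
    _ ≤ (A.popSet t').ncard :=
        Set.ncard_le_ncard hsub (A.popSet_finite t')

lemma popsAt_le_aux : ∀ t, ∀ p γ, A.PopsAt p γ t → t ≤ 2 ^ ((A.popSet t).ncard + 1) - 1 := by
  intro t
  induction t using Nat.strong_induction_on with
  | _ t ih =>
      intro p γ hp
      rcases A.popsAt_rec hp with h1 | ⟨p1, γ1, t1, hp1, hlt1, heq⟩ |
          ⟨p1, γ1, t1, p2, γ2, t2, hp1, hp2, hlt1, hlt2, heq⟩
      · have : 2 ^ 1 ≤ 2 ^ ((A.popSet t).ncard + 1) :=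
          Nat.pow_le_pow_right (by norm_num) (by omega)
        omega
      · have hb1 := ih t1 hlt1 p1 γ1 hp1
        have hr1 := A.popsAt_rank hp1 hlt1
        have hm1 : 2 ^ ((A.popSet t1).ncard + 1) ≤ 2 ^ (A.popSet t).ncard :=
          Nat.pow_le_pow_right (by norm_num) hr1
        have hpos : 1 ≤ 2 ^ (A.popSet t).ncard := Nat.one_le_two_pow
        have h2 : 2 ^ ((A.popSet t).ncard + 1) = 2 * 2 ^ (A.popSet t).ncard := by
          rw [Nat.pow_succ]; ring
        omega
      · have hb1 := ih t1 hlt1 p1 γ1 hp1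
        have hb2 := ih t2 hlt2 p2 γ2 hp2
        have hr1 := A.popsAt_rank hp1 hlt1
        have hr2 := A.popsAt_rank hp2 hlt2
        have hm1 : 2 ^ ((A.popSet t1).ncard + 1) ≤ 2 ^ (A.popSet t).ncard :=
          Nat.pow_le_pow_right (by norm_num) hr1
        have hm2 : 2 ^ ((A.popSet t2).ncard + 1) ≤ 2 ^ (A.popSet t).ncard :=
          Nat.pow_le_pow_right (by norm_num) hr2
        have hpos1 : 1 ≤ 2 ^ ((A.popSet t1).ncard + 1) := Nat.one_le_two_pow
        have hpos2 : 1 ≤ 2 ^ ((A.popSet t2).ncard + 1) := Nat.one_le_two_pow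
        have h2 : 2 ^ ((A.popSet t).ncard + 1) = 2 * 2 ^ (A.popSet t).ncard := by
          rw [Nat.pow_succ]; ring
        omega

lemma size_pos : 1 ≤ A.size := by
  haveI := A.finQ
  haveI := A.finΓ
  haveI : Nonempty Q := ⟨A.init⟩
  haveI : Nonempty Γ := ⟨A.bot⟩
  have h1 : 0 < Nat.card Q := Nat.card_pos
  have h2 : 0 < Nat.card Γ := Nat.card_pos
  have : 0 < A.size := by
    rw [size]
    exact Nat.mul_pos h1 h2
  omega

/-- The fundamental exponential bound on pop times. -/
lemma popsAt_le {p : Q} {γ : Γ} {t : ℕ} (hp : A.PopsAt p γ t) : t ≤ 2 ^ A.size - 1 := by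
  haveI := A.finQ
  haveI := A.finΓ
  have hcard : Nat.card (Q × Γ) = A.size := by
    rw [Nat.card_prod]; rfl
  have hnot : (p, γ) ∉ A.popSet t := by
    rintro ⟨s, hs, hps⟩
    have := A.popsAt_unique hps hp
    omega
  have hsub : A.popSet t ⊆ (Set.univ : Set (Q × Γ)) \ {(p, γ)} := by
    intro x hx
    refine ⟨trivial, ?_⟩
    intro hxx
    simp at hxx
    rw [hxx] at hx
    exact hnot hx
  have hle : (A.popSet t).ncard ≤ A.size - 1 := by
    calc (A.popSet t).ncard ≤ ((Set.univ : Set (Q × Γ)) \ {(p, γ)}).ncard :=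
          Set.ncard_le_ncard hsub (Set.toFinite _)
      _ = (Set.univ : Set (Q × Γ)).ncard - 1 := by
          rw [Set.ncard_diff_singleton_of_mem (Set.mem_univ _)]
      _ = A.size - 1 := by rw [Set.ncard_univ, hcard]
  have hsz := A.size_pos
  have hb := A.popsAt_le_aux t p γ hp
  have hmono : 2 ^ ((A.popSet t).ncard + 1) ≤ 2 ^ A.size :=
    Nat.pow_le_pow_right (by norm_num) (by omega)
  omega

end PopBound


section Stairs

/-- The global run of the automaton from its initial configuration. -/
noncomputable def grun (i : ℕ) : Q × List Γ := A.run (A.init, [A.bot]) i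

lemma isStack_grun (i : ℕ) : A.toPrePDA.IsStack (A.grun i).2 :=
  A.isStack_run A.isStack_bot i

lemma grun_len_pos (i : ℕ) : 1 ≤ (A.grun i).2.length :=
  A.isStack_length_pos (A.isStack_grun i)

lemma grun_add (i r : ℕ) : A.grun (i + r) = A.run (A.grun i) r := A.run_add _ i r

/-- A stair: a time from which the stack height never drops below its current value. -/
def Stair (i : ℕ) : Prop := ∀ r, i ≤ r → (A.grun i).2.length ≤ (A.grun r).2.length

lemma stair_zero : A.Stair 0 := by
  intro r _
  have := A.grun_len_pos r
  have h0 : (A.grun 0).2.length = 1 := by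
    show ([A.bot] : List Γ).length = 1
    rfl
  omega

lemma stair_gap {i : ℕ} (hst : A.Stair i) :
    ∃ j, A.Stair j ∧ i < j ∧ j ≤ i + 2 ^ A.size := by
  have hpow : 1 ≤ 2 ^ A.size := Nat.one_le_two_pow
  have hsucc : A.grun (i + 1) = A.step (A.grun i) := by
    rw [grun, run_succ]; rfl
  by_cases hex : ∃ pp : Bool × (Q × List Γ), A.toPrePDA.Move (A.grun i) pp.1 pp.2
  swap
  · -- frozen: next step is also a stair
    refine ⟨i + 1, ?_, by omega, by omega⟩
    intro r hr
    have : A.grun (i + 1) = A.grun i := by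
      rw [hsucc, step, A.stepB_frozen hex]
    rw [this]
    exact hst r (by omega)
  · have hm := A.stepB_move hex
    have hgr1 : A.grun (i + 1) = (A.stepB (A.grun i)).2 := by rw [hsucc, step]
    rcases A.move_cases hm with ⟨γ0, w, u0, hc, hc', hwl, hwf⟩ | ⟨hc, hc'⟩
    swap
    · -- the bottom self-loop: height stays the same
      refine ⟨i + 1, ?_, by omega, by omega⟩
      intro r hr
      have hl : (A.grun (i + 1)).2.length = (A.grun i).2.length := by
        rw [hgr1, hc', hc]
      rw [hl]
      exact hst r (by omega)
    · have hlen1 : (A.grun (i + 1)).2.length = w.length + u0.length := by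
        rw [hgr1, hc']; simp
    
      have hlen0 : (A.grun i).2.length = u0.length + 1 := by rw [hc]; simp
      match w, hwl with
      | [], _ =>
          exfalso
          have := hst (i + 1) (by omega)
          simp at hlen1
          omega
      | [γ1], _ =>
          refine ⟨i + 1, ?_, by omega, by omega⟩
          intro r hr
          have : (A.grun (i + 1)).2.length = (A.grun i).2.length := by
            simp at hlen1; omega
          rw [this]
          exact hst r (by omega)
      | [γ1, γ2], _ =>
          by_cases hall : ∀ r, i + 1 ≤ r → (A.grun (i + 1)).2.length ≤ (A.grun r).2.length
          · exact ⟨i + 1, hall, by omega, by omega⟩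
          · -- excursion: find the first return T to the base height
            have hT : ∃ r, i + 1 ≤ r ∧ (A.grun r).2.length ≤ (A.grun i).2.length := by
              push_neg at hall
              obtain ⟨r, hr1, hr2⟩ := hall
              refine ⟨r, hr1, ?_⟩
              simp at hlen1
              omega
            set T := Nat.find hT with hTdef
            obtain ⟨hT1, hT2⟩ := Nat.find_spec hT
            rw [← hTdef] at hT1 hT2
            have hTmin : ∀ s, i + 1 ≤ s → s < T → (A.grun i).2.length < (A.grun s).2.length := by
              intro s hs1 hs2
              have := Nat.find_min hT hs2
              push_neg at this
              rcases Nat.lt_or_ge (A.grun i).2.length (A.grun s).2.length with h | h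
              · exact h
              · exact absurd (this hs1) (by omega)
            have hstairT : A.Stair T := by
              intro r hr
              have h1 := hst r (by omega)
              have h2 := hst T (by omega)
              omega
            -- now bound T via the pop-time of γ1
            set q1 := (A.grun (i + 1)).1 with hq1
            have hγ1 : γ1 ≠ A.bot := by
              have hv1 : A.toPrePDA.IsStack (γ1 :: (γ2 :: u0)) := by
                have h := A.isStack_grun (i + 1)
                rw [hgr1, hc'] at h
                simpa using h
              exact A.isStack_head_ne_bot hv1 (by simp)
            have hgreq : A.grun (i + 1) = (q1, [γ1] ++ (γ2 :: u0)) := by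
              refine Prod.ext rfl ?_
              rw [hgr1, hc']
              simp
            have hrunconn : ∀ r, A.run (q1, [γ1] ++ (γ2 :: u0)) r = A.grun (i + 1 + r) := by
              intro r
              rw [grun_add, hgreq]
            set ρ := γ2 :: u0 with hρdef
            have hρlen : ρ.length = (A.grun i).2.length := by
              rw [hlen0, hρdef]; simp
            set tstar := T - (i + 1) with htstar
            have hTpos : i + 1 ≤ T := hT1
            have hTeq : T = i + 1 + tstar := by omega
            have hvb : A.toPrePDA.IsStack ([γ1] ++ ρ) := by
              have h := A.isStack_grun (i + 1)
              rw [hgreq] at h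
              exact h
            have hmir := A.mirror (q := q1) (τ := [γ1]) (ρ := ρ) (ρ' := [A.bot])
              (by simp) (by simp [hρdef]) (by simp) hvb
              (by simpa using A.isStack_pair hγ1)
            have hh : ∀ r < tstar, ρ.length < (A.run (q1, [γ1] ++ ρ) r).2.length := by
              intro r hr
              rw [hrunconn r, hρlen]
              exact hTmin (i + 1 + r) (by omega) (by omega)
            obtain ⟨τ', hm1, hm2, -⟩ := hmir tstar hh
            have hTlen : (A.grun T).2.length = ρ.length := by
              have := hst T (by omega)
              omega
            have hτnil : τ' = [] := by
              rw [hrunconn, ← hTeq] at hm1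
              have := congrArg List.length hm1
              rw [hTlen] at this
              simp at this
              exact this
            have hpop : A.PopsAt q1 γ1 tstar := by
              refine ⟨hγ1, ?_, ?_⟩
              · have : A.run (q1, [γ1] ++ [A.bot]) tstar =
                    ((A.run (q1, [γ1] ++ ρ) tstar).1, τ' ++ [A.bot]) := hm2
                rw [hτnil] at this
                simp only [List.singleton_append] at this
                rw [this]
                rfl
              · intro r hr
                obtain ⟨τr, hr1, hr2, -⟩ := hmir r (fun r' hr' => hh r' (by omega))
                have hτr : τr ≠ [] := by
                  intro hnil
                  have hx := hh r hr
                  rw [hr1, hnil] at hx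
                  simp at hx
                simp only [List.singleton_append] at hr2
                rw [hr2]
                obtain ⟨a, l, rfl⟩ := List.exists_cons_of_ne_nil hτr
                simp
            have hbound := A.popsAt_le hpop
            exact ⟨T, hstairT, by omega, by omega⟩

end Stairs


section Shift

open Classical in
noncomputable def stairSeq : ℕ → ℕ
  | 0 => 0
  | m + 1 => if h : A.Stair (stairSeq m) then (A.stair_gap h).choose else 0

lemma stairSeq_stair (m : ℕ) : A.Stair (A.stairSeq m) := by
  induction m with
  | zero => exact A.stair_zero
  | succ m ih =>
      rw [stairSeq, dif_pos ih]
      exact (A.stair_gap ih).choose_spec.1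

lemma stairSeq_lt (m : ℕ) : A.stairSeq m < A.stairSeq (m + 1) := by
  rw [stairSeq, dif_pos (A.stairSeq_stair m)]
  exact (A.stair_gap (A.stairSeq_stair m)).choose_spec.2.1

lemma stairSeq_le (m : ℕ) : A.stairSeq (m + 1) ≤ A.stairSeq m + 2 ^ A.size := by
  rw [stairSeq, dif_pos (A.stairSeq_stair m)]
  exact (A.stair_gap (A.stairSeq_stair m)).choose_spec.2.2

lemma stairSeq_strictMono : StrictMono A.stairSeq :=
  strictMono_nat_of_lt_succ A.stairSeq_lt

lemma stairSeq_bound (m : ℕ) : A.stairSeq m ≤ m * 2 ^ A.size := by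
  induction m with
  | zero => simp [stairSeq]
  | succ m ih =>
      have := A.stairSeq_le m
      have harith : (m + 1) * 2 ^ A.size = m * 2 ^ A.size + 2 ^ A.size := by ring
      omega

/-- Suffix preservation from a stair onwards. -/
lemma stair_suffix {i : ℕ} (hst : A.Stair i) {γ : Γ} {ρ : List Γ}
    (hc : (A.grun i).2 = γ :: ρ) (r : ℕ) : ρ <:+ (A.grun (i + r)).2 := by
  rw [grun_add]
  apply A.run_suffix (by rw [hc]; exact List.suffix_cons γ ρ) r
  intro r' _
  have h1 := hst (i + r') (by omega)
  have h2 : (A.grun i).2.length = ρ.length + 1 := by rw [hc]; simp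
  rw [← grun_add]
  omega

/-- The main structural lemma: within an exponential time bound there are two
positions from which the run repeats the same states and reads the same
numbers of letters, forever. -/
lemma exists_shift : ∃ i j : ℕ, i < j ∧ j ≤ A.size * 2 ^ A.size ∧
    (∀ r, (A.grun (j + r)).1 = (A.grun (i + r)).1) ∧
    (∃ X : ℕ → ℕ, ∀ r, A.cnt (A.init, [A.bot]) (i + r) = A.cnt (A.init, [A.bot]) i + X r ∧
      A.cnt (A.init, [A.bot]) (j + r) = A.cnt (A.init, [A.bot]) j + X r) := by
  haveI := A.finQ
  haveI := A.finΓ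
  haveI : Inhabited Γ := ⟨A.bot⟩
  haveI : Fintype Q := Fintype.ofFinite Q
  haveI : Fintype Γ := Fintype.ofFinite Γ
  -- pigeonhole on (state, top symbol) at the stairs
  have hcard : Fintype.card (Q × Γ) < Fintype.card (Fin (A.size + 1)) := by
    rw [Fintype.card_fin, Fintype.card_prod]
    have h1 : Fintype.card Q = Nat.card Q := (Nat.card_eq_fintype_card).symm
    have h2 : Fintype.card Γ = Nat.card Γ := (Nat.card_eq_fintype_card).symm
    rw [h1, h2]
    show A.size < A.size + 1
    omega
  obtain ⟨a, b, hab, hfeq⟩ := Fintype.exists_ne_map_eq_of_card_lt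
    (fun m : Fin (A.size + 1) =>
      ((A.grun (A.stairSeq m)).1, (A.grun (A.stairSeq m)).2.headI)) hcard
  -- wlog a < b
  wlog hlt : (a : ℕ) < (b : ℕ) generalizing a b
  · exact this b a (Ne.symm hab) hfeq.symm (by
      have : (a : ℕ) ≠ (b : ℕ) := fun h => hab (Fin.ext h)
      omega)
  set i := A.stairSeq a with hidef
  set j := A.stairSeq b with hjdef
  have hij : i < j := A.stairSeq_strictMono hlt
  have hjb : j ≤ A.size * 2 ^ A.size := by
    have h1 := A.stairSeq_bound b
    have h2 : (b : ℕ) ≤ A.size := by omega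
    have h3 : (b : ℕ) * 2 ^ A.size ≤ A.size * 2 ^ A.size :=
      Nat.mul_le_mul_right _ h2
    omega
  have hsti := A.stairSeq_stair a
  have hstj := A.stairSeq_stair b
  rw [← hidef] at hsti
  rw [← hjdef] at hstj
  have hq : (A.grun i).1 = (A.grun j).1 := (Prod.ext_iff.mp hfeq).1
  have hhead : (A.grun i).2.headI = (A.grun j).2.headI := (Prod.ext_iff.mp hfeq).2
  -- decompose the two stacks
  obtain ⟨γ, ρ, hci⟩ := List.exists_cons_of_ne_nil (A.isStack_ne_nil (A.isStack_grun i))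
  obtain ⟨γ', ρ2, hcj⟩ := List.exists_cons_of_ne_nil (A.isStack_ne_nil (A.isStack_grun j))
  have hγγ : γ' = γ := by
    rw [hci, hcj] at hhead
    simpa using hhead.symm
  rw [hγγ] at hcj
  -- ρ is a suffix of the stack at time j
  have hsufj : ρ <:+ (A.grun j).2 := by
    have := A.stair_suffix hsti hci (j - i)
    have hji : i + (j - i) = j := by omega
    rwa [hji] at this
  have hlenij : (A.grun i).2.length ≤ (A.grun j).2.length := hsti j (by omega)
  rcases Nat.eq_or_lt_of_le hlenij with heq | hlt2
  · -- equal heights: exact configuration repeat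
    have hρρ : ρ2 = ρ := by
      rw [hcj] at hsufj
      rcases List.suffix_cons_iff.mp hsufj with h | h
      · exfalso
        have := congrArg List.length h
        rw [hci, hcj] at heq
        simp at heq this
        omega
      · have hl : ρ.length = ρ2.length := by
          rw [hci, hcj] at heq
          simp at heq
          omega
        exact (List.IsSuffix.eq_of_length h hl).symm
    have hgeq : A.grun j = A.grun i := by
      refine Prod.ext hq.symm ?_
      rw [hci, hcj, hρρ]
    refine ⟨i, j, hij, hjb, ?_, A.cnt (A.grun i), ?_⟩
    · intro r
      rw [grun_add, grun_add, hgeq]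
    · intro r
      constructor
      · show A.cnt (A.init, [A.bot]) (i + r) = _
        rw [cnt_add]; rfl
      · show A.cnt (A.init, [A.bot]) (j + r) = _
        rw [cnt_add]
        congr 1
        show A.cnt (A.grun j) r = A.cnt (A.grun i) r
        rw [hgeq]
  · -- strictly higher: use the mirror lemma
    have hρ2suf : ρ <:+ ρ2 := by
      rw [hcj] at hsufj
      rcases List.suffix_cons_iff.mp hsufj with h | h
      · exfalso
        have := congrArg List.length h
        rw [hci, hcj] at hlt2
        simp at this hlt2
        omega
      · exact h
    have hρlt : ρ.length < ρ2.length := by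
      rw [hci, hcj] at hlt2
      simp at hlt2
      omega
    have hρne : ρ ≠ [] := by
      intro hnil
      -- then the stack at i is [⊥] and the head is ⊥, contradicting validity at j
      have h1 : (A.grun i).2 = [A.bot] := by
        apply A.isStack_length_one (A.isStack_grun i)
        rw [hci, hnil]
        rfl
      have hγbot : γ = A.bot := by
        rw [hci, hnil] at h1
        simpa using h1
      have hρ2ne : ρ2 ≠ [] := by
        intro h2
        rw [h2, hnil] at hρlt
        simp at hρlt
      have := A.isStack_head_ne_bot (by rw [← hcj]; exact A.isStack_grun j) hρ2ne
      exact this hγbot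
    have hρ2ne : ρ2 ≠ [] := by
      intro h2
      rw [h2] at hρlt
      simp at hρlt
    set q := (A.grun i).1 with hqdef
    have hgi : A.grun i = (q, [γ] ++ ρ) := by
      refine Prod.ext rfl ?_
      rw [hci]; simp
    have hgj : A.grun j = (q, [γ] ++ ρ2) := by
      refine Prod.ext hq.symm ?_
      rw [hcj]; simp
    have hvρ : A.toPrePDA.IsStack ([γ] ++ ρ) := by
      have h := A.isStack_grun i
      rw [hgi] at h
      exact h
    have hvρ2 : A.toPrePDA.IsStack ([γ] ++ ρ2) := by
      have h := A.isStack_grun j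
      rw [hgj] at h
      exact h
    have hmir := A.mirror (q := q) (τ := [γ]) (ρ := ρ) (ρ' := ρ2)
      (by simp) hρne hρ2ne hvρ hvρ2
    have hconn : ∀ r, A.run (q, [γ] ++ ρ) r = A.grun (i + r) := by
      intro r
      rw [grun_add, hgi]
    have hconn2 : ∀ r, A.run (q, [γ] ++ ρ2) r = A.grun (j + r) := by
      intro r
      rw [grun_add, hgj]
    have hh : ∀ t, ∀ r < t, ρ.length < (A.run (q, [γ] ++ ρ) r).2.length := by
      intro t r _
      rw [hconn]
      have h1 := hsti (i + r) (by omega)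
      have h2 : (A.grun i).2.length = ρ.length + 1 := by rw [hci]; simp
      omega
    refine ⟨i, j, hij, hjb, ?_, A.cnt (A.grun i), ?_⟩
    · intro r
      obtain ⟨τ', -, hm2, -⟩ := hmir r (hh r)
      rw [← hconn2, hm2, hconn]
    · intro r
      obtain ⟨τ', -, -, hm3⟩ := hmir r (hh r)
      constructor
      · show A.cnt (A.init, [A.bot]) (i + r) = _
        rw [cnt_add]; rfl
      · show A.cnt (A.init, [A.bot]) (j + r) = _
        rw [cnt_add]
        congr 1
        rw [← hgi, ← hgj] at hm3
        show A.cnt (A.grun j) r = A.cnt (A.grun i) r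
        exact hm3

end Shift


section Periodic

lemma size_bound : A.size * 2 ^ A.size + 1 ≤ 2 ^ (3 * A.size) := by
  have h1 : A.size + 1 ≤ 2 ^ A.size := Nat.lt_two_pow_self (n := A.size)
  have h2 : (A.size + 1) * 2 ^ A.size ≤ 2 ^ A.size * 2 ^ A.size :=
    Nat.mul_le_mul_right _ h1
  have h3 : 2 ^ A.size * 2 ^ A.size = 2 ^ (2 * A.size) := by
    rw [← pow_add]; ring_nf
  have h4 : 1 ≤ 2 ^ A.size := Nat.one_le_two_pow
  have h5 : 2 ^ (2 * A.size) ≤ 2 ^ (3 * A.size) :=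
    Nat.pow_le_pow_right (by norm_num) (by omega)
  have h7 : (A.size + 1) * 2 ^ A.size = A.size * 2 ^ A.size + 2 ^ A.size := by ring
  omega

/-- Every udpda language is eventually periodic, with exponentially bounded
threshold and period. -/
lemma eventually_periodic : ∃ t p : ℕ, 1 ≤ p ∧ t ≤ 2 ^ (3 * A.size) ∧
    p ≤ 2 ^ (3 * A.size) ∧ ∀ n, t ≤ n → (n ∈ A.lang ↔ n + p ∈ A.lang) := by
  obtain ⟨i, j, hij, hjb, hstate, X, hX⟩ := A.exists_shift
  have hsb := A.size_bound
  have hstate' : ∀ r, (A.run (A.init, [A.bot]) (j + r)).1 =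
      (A.run (A.init, [A.bot]) (i + r)).1 := fun r => hstate r
  have hXmono : ∀ r1 r2, r1 ≤ r2 → X r1 ≤ X r2 := by
    intro r1 r2 h
    have h1 := (hX r1).1
    have h2 := (hX r2).1
    have h3 := A.cnt_mono (A.init, [A.bot]) (Nat.add_le_add_left h i)
    omega
  set e := j - i with hedef
  have hie : i + e = j := by omega
  have hd : A.cnt (A.init, [A.bot]) j = A.cnt (A.init, [A.bot]) i + X e := by
    have := (hX e).1
    rwa [hie] at this
  set d := X e with hddef
  have hXadd : ∀ r, X (e + r) = d + X r := by
    intro r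
    have h1 := (hX (e + r)).1
    have h2 := (hX r).2
    have h3 : i + (e + r) = j + r := by omega
    rw [h3] at h1
    omega
  have hcnti : A.cnt (A.init, [A.bot]) i ≤ i := A.cnt_le _ i
  have hcntj : A.cnt (A.init, [A.bot]) j ≤ j := A.cnt_le _ j
  rcases Nat.eq_zero_or_pos d with hd0 | hd1
  · -- no letters are read any more: finite language
    have hX0 : ∀ r, X r = 0 := by
      intro r
      have he1 : 1 ≤ e := by omega
      have hmul : ∀ m, X (m * e) = 0 := by
        intro m
        induction m with
        | zero =>
            have h0 := (hX 0).1
            rw [Nat.add_zero] at h0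
            have h1 : X 0 = 0 := by omega
            simpa using h1
        | succ m ih =>
            have hh := hXadd (m * e)
            have harith : e + m * e = (m + 1) * e := by ring
            rw [harith] at hh
            omega
      have hle : r ≤ r * e := Nat.le_mul_of_pos_right r (by omega)
      have h1 := hXmono r (r * e) hle
      have h2 := hmul r
      have h3 := (hX 0).1
      omega
    have hnot : ∀ n, A.cnt (A.init, [A.bot]) i + 1 ≤ n → n ∉ A.lang := by
      intro n hn hmem
      rw [A.mem_lang_iff] at hmem
      obtain ⟨m, hcnt, -⟩ := hmem
      rcases Nat.le_total m i with h | h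
      · have := A.cnt_mono (A.init, [A.bot]) h
        omega
      · obtain ⟨r, rfl⟩ := Nat.le.dest h
        have h1 := (hX r).1
        have h2 := hX0 r
        omega
    refine ⟨A.cnt (A.init, [A.bot]) i + 1, 1, le_refl 1, by omega, by omega, ?_⟩
    intro n hn
    constructor
    · intro h; exact absurd h (hnot n hn)
    · intro h; exact absurd h (hnot (n + 1) (by omega))
  · -- the period is d
    refine ⟨A.cnt (A.init, [A.bot]) j, d, hd1, by omega, by omega, ?_⟩
    intro n hn
    rw [A.mem_lang_iff, A.mem_lang_iff]
    constructor
    · rintro ⟨m, hcnt, hfin⟩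
      have him : i ≤ m := by
        by_contra h
        push_neg at h
        have := A.cnt_mono (A.init, [A.bot]) (le_of_lt h)
        omega
      obtain ⟨r, rfl⟩ := Nat.le.dest him
      refine ⟨j + r, ?_, ?_⟩
      · have h1 := (hX r).1
        have h2 := (hX r).2
        omega
      · rw [hstate' r]
        exact hfin
    · rintro ⟨m, hcnt, hfin⟩
      have hjm : j ≤ m := by
        by_contra h
        push_neg at h
        have := A.cnt_mono (A.init, [A.bot]) (le_of_lt h)
        omega
      obtain ⟨r, rfl⟩ := Nat.le.dest hjm
      refine ⟨i + r, ?_, ?_⟩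
      · have h1 := (hX r).1
        have h2 := (hX r).2
        omega
      · rw [← hstate' r]
        exact hfin

end Periodic


lemma periodic_iterate {t p : ℕ}
    (hper : ∀ n, t ≤ n → (n ∈ A.lang ↔ n + p ∈ A.lang)) :
    ∀ m n, t ≤ n → (n ∈ A.lang ↔ n + m * p ∈ A.lang) := by
  intro m
  induction m with
  | zero => intro n _; simp
  | succ m ih =>
      intro n hn
      have h1 := ih n hn
      have h2 := hper (n + m * p) (by omega)
      have h3 : n + (m + 1) * p = n + m * p + p := by ring
      rw [h3]
      exact h1.trans h2

end UDPDA

theorem udpda_inclusion_small_witness' :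
    ∃ C : ℕ, ∀ (Q1 Γ1 Q2 Γ2 : Type) (A1 : UDPDA Q1 Γ1) (A2 : UDPDA Q2 Γ2),
      ¬(A1.lang ⊆ A2.lang) →
      ∃ n : ℕ, n ≤ 2 ^ (C * (A1.size + A2.size)) ∧ n ∈ A1.lang ∧ n ∉ A2.lang := by
  refine ⟨7, ?_⟩
  intro Q1 Γ1 Q2 Γ2 A1 A2 hsub
  obtain ⟨t1, p1, hp1, ht1, hq1, hper1⟩ := A1.eventually_periodic
  obtain ⟨t2, p2, hp2, ht2, hq2, hper2⟩ := A2.eventually_periodic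
  set S := A1.size + A2.size with hSdef
  have hS : 1 ≤ S := by
    have := A1.size_pos
    have := A2.size_pos
    omega
  set t := max t1 t2 with htdef
  set P := p1 * p2 with hPdef
  have hP1 : 1 ≤ P := Nat.mul_pos hp1 hp2
  have hper1' : ∀ n, t ≤ n → (n ∈ A1.lang ↔ n + P ∈ A1.lang) := by
    intro n hn
    have h := A1.periodic_iterate hper1 p2 n (le_trans (le_max_left _ _) hn)
    rwa [show p2 * p1 = P from Nat.mul_comm _ _] at h
  have hper2' : ∀ n, t ≤ n → (n ∈ A2.lang ↔ n + P ∈ A2.lang) := by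
    intro n hn
    have h := A2.periodic_iterate hper2 p1 n (le_trans (le_max_right _ _) hn)
    rwa [show p1 * p2 = P from rfl] at h
  -- bounds
  have hmono1 : 2 ^ (3 * A1.size) ≤ 2 ^ (3 * S) :=
    Nat.pow_le_pow_right (by norm_num) (by have := A2.size_pos; omega)
  have hmono2 : 2 ^ (3 * A2.size) ≤ 2 ^ (3 * S) :=
    Nat.pow_le_pow_right (by norm_num) (by have := A1.size_pos; omega)
  have htB : t ≤ 2 ^ (3 * S) := by
    apply max_le <;> omega
  have hPB : P ≤ 2 ^ (3 * S) := by
    have h1 : P ≤ 2 ^ (3 * A1.size) * 2 ^ (3 * A2.size) := Nat.mul_le_mul hq1 hq2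
    have h2 : 2 ^ (3 * A1.size) * 2 ^ (3 * A2.size) = 2 ^ (3 * A1.size + 3 * A2.size) :=
      (pow_add 2 _ _).symm
    have h3 : 3 * A1.size + 3 * A2.size = 3 * S := by rw [hSdef]; ring
    rw [h2, h3] at h1
    exact h1
  have hfinal : t + P ≤ 2 ^ (7 * S) := by
    have h2 : 2 ^ (3 * S) + 2 ^ (3 * S) = 2 ^ (3 * S + 1) := by
      rw [pow_succ]; ring
    have h3 : 2 ^ (3 * S + 1) ≤ 2 ^ (7 * S) :=
      Nat.pow_le_pow_right (by norm_num) (by omega)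
    omega
  -- reduce the witness below t + P
  obtain ⟨n0, hn0in, hn0out⟩ := Set.not_subset.mp hsub
  have key : ∀ n0, n0 ∈ A1.lang → n0 ∉ A2.lang →
      ∃ n, n ≤ t + P ∧ n ∈ A1.lang ∧ n ∉ A2.lang := by
    intro n0
    induction n0 using Nat.strong_induction_on with
    | _ n0 ih =>
        intro h1 h2
        rcases Nat.lt_or_ge (t + P) n0 with h | h
        · set m := n0 - P with hmdef
          have hmP : m + P = n0 := by omega
          have hmt : t ≤ m := by omega
          have hm1 : m ∈ A1.lang := (hper1' m hmt).mpr (by rwa [hmP])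
          have hm2 : m ∉ A2.lang := fun hc => h2 (by rw [← hmP]; exact (hper2' m hmt).mp hc)
          exact ih m (by omega) hm1 hm2
        · exact ⟨n0, h, h1, h2⟩
  obtain ⟨n, hn, hnin, hnout⟩ := key n0 hn0in hn0out
  exact ⟨n, le_trans hn hfinal, hnin, hnout⟩

/-- There is an absolute constant `C` such that for all
udpda `A1`, `A2` of sizes `m1`, `m2`: if `L(A1) ⊄ L(A2)`, then some
`n ≤ 2^{C·(m1+m2)}` satisfies `a^n ∈ L(A1)` and `a^n ∉ L(A2)`. -/
theorem udpda_inclusion_small_witness :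
    ∃ C : ℕ, ∀ (Q1 Γ1 Q2 Γ2 : Type) (A1 : UDPDA Q1 Γ1) (A2 : UDPDA Q2 Γ2),
      ¬(A1.lang ⊆ A2.lang) →
      ∃ n : ℕ, n ≤ 2 ^ (C * (A1.size + A2.size)) ∧ n ∈ A1.lang ∧ n ∉ A2.lang :=
  udpda_inclusion_small_witness'
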